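/- Let K = ℚ(√2) (the intermediate field ℚ⟮√2⟯ of ℝ/ℚ), let b₀ = 8 − 6√2 and c₀ = 2 − 2√2, and let W be the Tate normal form E(b₀,c₀): y² + (1−c₀)xy − b₀y = x³ − b₀x² over K. Then (0,0) is an affine point of W and it has exact order 11 in the group of K-rational points of W. -/

import Mathlib

open scoped IntermediateField

open WeierstrassCurve.Affine in
private lemma some_congr' {F : Type*} [Field F] {W : WeierstrassCurve.Affine F}
    {x₁ y₁ x₂ y₂ : F} (hx : x₁ = x₂) (hy : y₁ = y₂)
    (h₁ : W.Nonsingular x₁ y₁) (h₂ : W.Nonsingular x₂ y₂) :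
    WeierstrassCurve.Affine.Point.some _ _ h₁ = WeierstrassCurve.Affine.Point.some _ _ h₂ := by
  subst hx; subst hy; rfl

open WeierstrassCurve.Affine in
/-- Let `K = ℚ(√2)`, `b₀ = 8 - 6√2`, `c₀ = 2 - 2√2`, and let `W` be the
Tate normal form `E(b₀,c₀)` over `K`. Then `(0,0)` is an affine point of `W` of exact
order `11` in the group of `K`-rational points. -/
theorem tate_normal_form_order_eleven
    (K : IntermediateField ℚ ℝ) (hK : K = ℚ⟮Real.sqrt 2⟯)
    (b₀ c₀ : K)
    (hb₀ : (b₀ : ℝ) = 8 - 6 * Real.sqrt 2) (hc₀ : (c₀ : ℝ) = 2 - 2 * Real.sqrt 2)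
    (W : WeierstrassCurve.Affine K)
    (hW : W = { a₁ := 1 - c₀, a₂ := -b₀, a₃ := -b₀, a₄ := 0, a₆ := 0 }) :
    ∃ h : W.Nonsingular 0 0,
      addOrderOf (WeierstrassCurve.Affine.Point.some _ _ h) = 11 := by
  have h2 : Real.sqrt 2 * Real.sqrt 2 = 2 := Real.mul_self_sqrt (by norm_num)
  have k2 : ((2:K):ℝ) = 2 := rfl
  have k3 : ((3:K):ℝ) = 3 := rfl
  have k4 : ((4:K):ℝ) = 4 := rfl
  have k32 : ((3/2:K):ℝ) = 3/2 := rfl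
  -- the two key algebraic relations in `K`
  have hc2 : c₀ ^ 2 = 4 * c₀ + 4 := by
    apply Subtype.coe_injective
    push_cast [k4]
    rw [hc₀]
    linear_combination 4 * h2
  have hb : b₀ = 2 + 3 * c₀ := by
    apply Subtype.coe_injective
    push_cast [k2, k3]
    rw [hb₀, hc₀]
    ring
  -- nonvanishing facts
  have hb0 : b₀ ≠ 0 := by
    intro h
    have h' : (8:ℝ) - 6 * Real.sqrt 2 = 0 := by rw [← hb₀, h]; simp
    have ht : Real.sqrt 2 = 4/3 := by linarith
    have h2' := h2
    rw [ht] at h2'; norm_num at h2'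
  have hc0 : c₀ ≠ 0 := by
    intro h
    have h' : (2:ℝ) - 2 * Real.sqrt 2 = 0 := by rw [← hc₀, h]; simp
    have ht : Real.sqrt 2 = 1 := by linarith
    have h2' := h2
    rw [ht] at h2'; norm_num at h2'
  have hX2 : (2 + 3 * c₀ : K) ≠ 0 := fun h => hb0 (hb.trans h)
  have hX4 : (1 + 3/2 * c₀ : K) ≠ 0 := by
    intro h
    have h' : ((1 + 3/2 * c₀ : K) : ℝ) = 0 := by rw [h]; simp
    push_cast [k2, k3, k32] at h'
    rw [hc₀] at h'
    have ht : Real.sqrt 2 = 4/3 := by linarith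
    have h2' := h2
    rw [ht] at h2'; norm_num at h2'
  have hX5 : (2 + c₀ : K) ≠ 0 := by
    intro h
    have h' : ((2 + c₀ : K) : ℝ) = 0 := by rw [h]; simp
    push_cast [k2] at h'
    rw [hc₀] at h'
    have ht : Real.sqrt 2 = 2 := by linarith
    have h2' := h2
    rw [ht] at h2'; norm_num at h2'
  -- curve coefficients
  have ha₁ : W.a₁ = 1 - c₀ := by rw [hW]
  have ha₂ : W.a₂ = -b₀ := by rw [hW]
  have ha₃ : W.a₃ = -b₀ := by rw [hW]
  have ha₄ : W.a₄ = 0 := by rw [hW]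
  have ha₆ : W.a₆ = 0 := by rw [hW]
  -- the base point
  have h1 : W.Nonsingular 0 0 := by
    rw [nonsingular_iff, equation_iff]
    constructor
    · rw [ha₁, ha₂, ha₃, ha₄, ha₆]; ring
    · right
      rw [ha₁, ha₃]
      intro h
      exact hb0 (by linear_combination -h)
  have hd : (0:K) ≠ W.negY 0 0 := by
    rw [negY, ha₁, ha₃]
    intro h
    exact hb0 (by linear_combination -h)
  -- doubling: 2P = (2+3c, 12+14c)
  have hL2 : W.slope 0 0 0 0 = 0 := by
    rw [slope_of_Y_ne rfl hd, ha₁, ha₂, ha₄]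
    norm_num
  have hx2 : W.addX 0 0 (W.slope 0 0 0 0) = 2 + 3 * c₀ := by
    rw [hL2]
    simp only [addX, ha₁, ha₂]
    linear_combination hb
  have hy2 : W.addY 0 0 0 (W.slope 0 0 0 0) = 12 + 14 * c₀ := by
    rw [hL2]
    simp only [addY, negAddY, addX, negY, ha₁, ha₂, ha₃]
    linear_combination c₀ * hb + 3 * hc2
  have h2n : W.Nonsingular (2 + 3 * c₀) (12 + 14 * c₀) := by
    have h := nonsingular_add h1 h1 fun hx' => hd hx'.2
    rwa [hx2, hy2] at h
  have es2 : Point.some _ _ h1 + Point.some _ _ h1 = Point.some _ _ h2n := by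
    rw [Point.add_self_of_Y_ne hd]
    exact some_congr' hx2 hy2 _ _
  -- 3P = 2P + P = (c, 2+2c)
  have hL3 : W.slope (2 + 3 * c₀) 0 (12 + 14 * c₀) 0 = c₀ := by
    rw [slope_of_X_ne hX2, div_eq_iff (sub_ne_zero.mpr hX2)]
    linear_combination (-3) * hc2
  have hx3 : W.addX (2 + 3 * c₀) 0 (W.slope (2 + 3 * c₀) 0 (12 + 14 * c₀) 0) = c₀ := by
    rw [hL3]
    simp only [addX, ha₁, ha₂]
    linear_combination hb
  have hy3 : W.addY (2 + 3 * c₀) 0 (12 + 14 * c₀)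
      (W.slope (2 + 3 * c₀) 0 (12 + 14 * c₀) 0) = 2 + 2 * c₀ := by
    rw [hL3]
    simp only [addY, negAddY, addX, negY, ha₁, ha₂, ha₃]
    linear_combination 3 * hc2
  have h3n : W.Nonsingular c₀ (2 + 2 * c₀) := by
    have h := nonsingular_add h2n h1 fun hx' => absurd hx'.1 hX2
    rwa [hx3, hy3] at h
  have es3 : Point.some _ _ h2n + Point.some _ _ h1 = Point.some _ _ h3n := by
    rw [Point.add_of_X_ne hX2]
    exact some_congr' hx3 hy3 _ _
  -- 4P = 3P + P = (1 + 3/2 c, 4 + 5c)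
  have hL4 : W.slope c₀ 0 (2 + 2 * c₀) 0 = c₀ / 2 := by
    rw [slope_of_X_ne hc0, div_eq_iff (sub_ne_zero.mpr hc0)]
    linear_combination (-1/2) * hc2
  have hx4 : W.addX c₀ 0 (W.slope c₀ 0 (2 + 2 * c₀) 0) = 1 + 3/2 * c₀ := by
    rw [hL4]
    simp only [addX, ha₁, ha₂]
    linear_combination hb + (-1/4) * hc2
  have hy4 : W.addY c₀ 0 (2 + 2 * c₀) (W.slope c₀ 0 (2 + 2 * c₀) 0) = 4 + 5 * c₀ := by
    rw [hL4]
    simp only [addY, negAddY, addX, negY, ha₁, ha₂, ha₃]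
    linear_combination (1/2) * c₀ * hb + (3/2 - 1/8 * c₀) * hc2
  have h4n : W.Nonsingular (1 + 3/2 * c₀) (4 + 5 * c₀) := by
    have h := nonsingular_add h3n h1 fun hx' => absurd hx'.1 hc0
    rwa [hx4, hy4] at h
  have es4 : Point.some _ _ h3n + Point.some _ _ h1 = Point.some _ _ h4n := by
    rw [Point.add_of_X_ne hc0]
    exact some_congr' hx4 hy4 _ _
  -- 5P = 4P + P = (2 + c, 4c)
  have hL5 : W.slope (1 + 3/2 * c₀) 0 (4 + 5 * c₀) 0 = (2 + c₀) / 2 := by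
    rw [slope_of_X_ne hX4, div_eq_iff (sub_ne_zero.mpr hX4)]
    linear_combination (-3/4) * hc2
  have hx5 : W.addX (1 + 3/2 * c₀) 0 (W.slope (1 + 3/2 * c₀) 0 (4 + 5 * c₀) 0)
      = 2 + c₀ := by
    rw [hL5]
    simp only [addX, ha₁, ha₂]
    linear_combination hb + (-1/4) * hc2
  have hy5 : W.addY (1 + 3/2 * c₀) 0 (4 + 5 * c₀)
      (W.slope (1 + 3/2 * c₀) 0 (4 + 5 * c₀) 0) = 4 * c₀ := by
    rw [hL5]
    simp only [addY, negAddY, addX, negY, ha₁, ha₂, ha₃]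
    linear_combination (-1 + 1/2 * c₀) * hb + (7/4 - 1/8 * c₀) * hc2
  have h5n : W.Nonsingular (2 + c₀) (4 * c₀) := by
    have h := nonsingular_add h4n h1 fun hx' => absurd hx'.1 hX4
    rwa [hx5, hy5] at h
  have es5 : Point.some _ _ h4n + Point.some _ _ h1 = Point.some _ _ h5n := by
    rw [Point.add_of_X_ne hX4]
    exact some_congr' hx5 hy5 _ _
  -- 6P = 5P + P = (2 + c, 4 + 4c)
  have hL6 : W.slope (2 + c₀) 0 (4 * c₀) 0 = c₀ - 2 := by
    rw [slope_of_X_ne hX5, div_eq_iff (sub_ne_zero.mpr hX5)]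
    linear_combination (-1) * hc2
  have hx6 : W.addX (2 + c₀) 0 (W.slope (2 + c₀) 0 (4 * c₀) 0) = 2 + c₀ := by
    rw [hL6]
    simp only [addX, ha₁, ha₂]
    linear_combination hb
  have hy6 : W.addY (2 + c₀) 0 (4 * c₀) (W.slope (2 + c₀) 0 (4 * c₀) 0)
      = 4 + 4 * c₀ := by
    rw [hL6]
    simp only [addY, negAddY, addX, negY, ha₁, ha₂, ha₃]
    linear_combination 2 * hb + hc2
  have h6n : W.Nonsingular (2 + c₀) (4 + 4 * c₀) := by
    have h := nonsingular_add h5n h1 fun hx' => absurd hx'.1 hX5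
    rwa [hx6, hy6] at h
  have es6 : Point.some _ _ h5n + Point.some _ _ h1 = Point.some _ _ h6n := by
    rw [Point.add_of_X_ne hX5]
    exact some_congr' hx6 hy6 _ _
  -- 6P = -(5P)
  have hneg : Point.some _ _ h6n = -Point.some _ _ h5n := by
    rw [Point.neg_some]
    refine some_congr' rfl ?_ _ _
    rw [negY, ha₁, ha₃]
    linear_combination (-1) * hb + (-1) * hc2
  -- assemble the multiples
  have e2' : (2:ℕ) • Point.some _ _ h1 = Point.some _ _ h2n := by rw [two_nsmul]; exact es2
  have e3' : (3:ℕ) • Point.some _ _ h1 = Point.some _ _ h3n := by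
    rw [show (3:ℕ) = 2 + 1 from rfl, add_nsmul, one_nsmul, e2']; exact es3
  have e4' : (4:ℕ) • Point.some _ _ h1 = Point.some _ _ h4n := by
    rw [show (4:ℕ) • Point.some _ _ h1 = (3 + 1) • Point.some _ _ h1 from rfl, add_nsmul, one_nsmul, e3']; exact es4
  have e5' : (5:ℕ) • Point.some _ _ h1 = Point.some _ _ h5n := by
    rw [show (5:ℕ) = 4 + 1 from rfl, add_nsmul, one_nsmul, e4']; exact es5
  have e6' : (6:ℕ) • Point.some _ _ h1 = Point.some _ _ h6n := by
    rw [show (6:ℕ) = 5 + 1 from rfl, add_nsmul, one_nsmul, e5']; exact es6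
  have e11 : (11:ℕ) • Point.some _ _ h1 = 0 := by
    rw [show (11:ℕ) = 6 + 5 from rfl, add_nsmul, e6', e5', hneg, neg_add_cancel]
  haveI : Fact (Nat.Prime 11) := ⟨by norm_num⟩
  exact ⟨h1, addOrderOf_eq_prime e11 (Point.some_ne_zero h1)⟩
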